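/- arXiv:2510.16900 — 3 statements merged into one kernel-verified Lean document; each statement's English description precedes it below -/
import Mathlib

section
/- For every n ≥ 1 and μ ≥ 1, the function λ ↦ |ln( |1 - e^{-iλμ}|^{2n} / λ^{2n} )| is integrable on [-π, π]. -/
open MeasureTheory Real Set

-- log integrable near 0
lemma log_ioc (b : ℝ) (hb : 0 ≤ b) : MeasureTheory.IntegrableOn Real.log (Set.Ioc 0 b) := by
  have hrp : IntegrableOn (fun x : ℝ => x ^ (-(1/2 : ℝ))) (Ioc 0 b) := by
    have := intervalIntegral.intervalIntegrable_rpow' (a := 0) (b := b)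
      (r := -(1/2 : ℝ)) (by norm_num)
    rwa [intervalIntegrable_iff_integrableOn_Ioc_of_le hb] at this
  have hbound : IntegrableOn (fun x : ℝ => 2 * x ^ (-(1/2 : ℝ)) + |Real.log b|) (Ioc 0 b) :=
    (hrp.const_mul 2).add (integrableOn_const measure_Ioc_lt_top.ne)
  refine hbound.integrable.mono (Real.measurable_log.aestronglyMeasurable) ?_
  filter_upwards [ae_restrict_mem measurableSet_Ioc] with x hx
  have hx0 : 0 < x := hx.1
  have h1 : Real.log (x ^ (-(1/2 : ℝ))) ≤ x ^ (-(1/2 : ℝ)) - 1 :=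
    Real.log_le_sub_one_of_pos (Real.rpow_pos_of_pos hx0 _)
  rw [Real.log_rpow hx0] at h1
  have h2 : Real.log x ≤ |Real.log b| :=
    le_trans (Real.log_le_log hx0 hx.2) (le_abs_self _)
  have h3 : 0 ≤ x ^ (-(1/2 : ℝ)) := (Real.rpow_pos_of_pos hx0 _).le
  rw [Real.norm_eq_abs, Real.norm_eq_abs,
    abs_of_nonneg (add_nonneg (mul_nonneg two_pos.le h3) (abs_nonneg _)), abs_le]
  constructor <;> nlinarith [abs_nonneg (Real.log b)]

lemma log_II (a b : ℝ) : IntervalIntegrable Real.log MeasureTheory.volume a b := by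
  have h0 : ∀ c : ℝ, IntervalIntegrable Real.log MeasureTheory.volume 0 c := by
    intro c
    rcases le_or_gt 0 c with hc | hc
    · rw [intervalIntegrable_iff_integrableOn_Ioc_of_le hc]
      exact log_ioc c hc
    · have h := (intervalIntegrable_iff_integrableOn_Ioc_of_le (by linarith : (0:ℝ) ≤ -c)).2
        (log_ioc (-c) (by linarith))
      have h2 := h.comp_mul_left (c := -1)
      simp only [zero_div, neg_div, div_neg, div_one, neg_neg, neg_zero] at h2
      have heq : (fun x : ℝ => Real.log (-1 * x)) = Real.log := by
        funext x; rw [neg_one_mul, Real.log_neg_eq_log]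
      rwa [heq] at h2
  exact (h0 a).symm.trans (h0 b)

lemma logsin_II (a b : ℝ) :
    IntervalIntegrable (fun x => Real.log (Real.sin x)) MeasureTheory.volume a b := by
  set p : ℝ → ℝ := fun x => Real.log (Real.sin x) with hp
  have hper : Function.Periodic p π := by
    intro x; simp only [hp, Real.sin_add_pi, Real.log_neg_eq_log]
  have base0 : IntervalIntegrable p MeasureTheory.volume 0 (π/2) := by
    rw [intervalIntegrable_iff_integrableOn_Ioc_of_le (by positivity)]
    have hbound : IntegrableOn (fun x : ℝ => |Real.log x| + π) (Ioc 0 (π/2)) :=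
      ((log_ioc (π/2) (by positivity)).abs).add (integrableOn_const measure_Ioc_lt_top.ne)
    refine hbound.integrable.mono
      ((Real.measurable_log.comp Real.measurable_sin).aestronglyMeasurable) ?_
    filter_upwards [ae_restrict_mem measurableSet_Ioc] with x hx
    have hx0 : 0 < x := hx.1
    have hsp : 0 < Real.sin x :=
      Real.sin_pos_of_pos_of_lt_pi hx0 (lt_of_le_of_lt hx.2 (by linarith [Real.pi_pos]))
    have hs1 : Real.sin x ≤ 1 := Real.sin_le_one x
    have hj : 2 / π * x ≤ Real.sin x := Real.mul_le_sin hx0.le hx.2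
    have hjp : (0:ℝ) < 2 / π * x := by positivity
    have h1 : Real.log (2 / π * x) ≤ Real.log (Real.sin x) := Real.log_le_log hjp hj
    have h2 : Real.log (2 / π * x) = Real.log (2/π) + Real.log x :=
      Real.log_mul (by positivity) hx0.ne'
    have h3 : Real.log (2/π) = Real.log 2 - Real.log π := Real.log_div two_ne_zero Real.pi_ne_zero
    have h4 : Real.log π ≤ π - 1 := Real.log_le_sub_one_of_pos Real.pi_pos
    have h5 : (0:ℝ) ≤ Real.log 2 := Real.log_nonneg one_le_two
    have h6 : Real.log (Real.sin x) ≤ 0 := Real.log_nonpos hsp.le hs1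
    rw [Real.norm_eq_abs, Real.norm_eq_abs,
      abs_of_nonneg (add_nonneg (abs_nonneg _) Real.pi_pos.le), abs_le]
    have h7 := neg_abs_le (Real.log x)
    have h8 := le_abs_self (Real.log x)
    constructor
    · simp only [hp]; nlinarith [Real.pi_pos]
    · simp only [hp]; nlinarith [abs_nonneg (Real.log x), Real.pi_pos]
  have base1 : IntervalIntegrable p MeasureTheory.volume (π/2) π := by
    have h := base0.comp_sub_left π
    have heq : (fun x => p (π - x)) = p := by
      funext x; simp only [hp, Real.sin_pi_sub]
    rw [heq, sub_zero, show π - π/2 = π/2 by ring] at h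
    exact h.symm
  have base : IntervalIntegrable p MeasureTheory.volume 0 π := base0.trans base1
  have basek : ∀ k : ℤ, IntervalIntegrable p MeasureTheory.volume (k*π) (k*π + π) := by
    intro k
    have h := base.comp_add_right (-(k*π))
    have heq : (fun x => p (x + -((k:ℝ)*π))) = p := by
      funext x
      have := (hper.int_mul (-k)) x
      push_cast at this
      rw [show x + -((k:ℝ)*π) = x + -(k:ℝ)*π by ring]
      exact this
    rw [heq, zero_sub, neg_neg] at h
    rw [show (k:ℝ)*π + π = π - -((k:ℝ)*π) by ring]
    exact h
  have chain : ∀ m : ℕ, IntervalIntegrable p MeasureTheory.volume (-(m*π)) (m*π) := by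
    intro m
    induction m with
    | zero =>
      simp only [Nat.cast_zero, zero_mul, neg_zero]
      have := basek 0
      simp only [Int.cast_zero, zero_mul, zero_add] at this
      exact this.mono_set (by
        rw [Set.uIcc_self]
        exact Set.singleton_subset_iff.2 Set.left_mem_uIcc)
    | succ k ih =>
      have hl := basek (-(k+1))
      have hr := basek k
      push_cast at hl hr ⊢
      rw [show -((k:ℝ)+1)*π + π = -((k:ℝ)*π) by ring,
        show -((k:ℝ)+1)*π = -(((k:ℝ)+1)*π) by ring] at hl
      rw [show (k:ℝ)*π + π = ((k:ℝ)+1)*π by ring] at hr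
      exact (hl.trans ih).trans hr
  obtain ⟨m, hm⟩ := exists_nat_ge (max |a| |b|)
  have hπ1 : (1:ℝ) ≤ π := by linarith [Real.pi_gt_three]
  have hmπ : max |a| |b| ≤ (m:ℝ)*π := by
    calc max |a| |b| ≤ (m:ℝ) := hm
    _ = (m:ℝ)*1 := by ring
    _ ≤ (m:ℝ)*π := by
        apply mul_le_mul_of_nonneg_left hπ1 (Nat.cast_nonneg m)
  have hmem : ∀ x : ℝ, |x| ≤ max |a| |b| → x ∈ Set.uIcc (-((m:ℝ)*π)) ((m:ℝ)*π) := by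
    intro x hx
    have hx' : |x| ≤ (m:ℝ)*π := le_trans hx hmπ
    obtain ⟨hx1, hx2⟩ := abs_le.mp hx'
    rw [Set.uIcc_of_le (by linarith [abs_nonneg x] : -((m:ℝ)*π) ≤ (m:ℝ)*π)]
    exact ⟨hx1, hx2⟩
  exact (chain m).mono_set
    (Set.uIcc_subset_uIcc (hmem a (le_max_left _ _)) (hmem b (le_max_right _ _)))

lemma abs_one_sub_exp (θ : ℝ) :
    ‖1 - Complex.exp (((-θ : ℝ) : ℂ) * Complex.I)‖ = 2 * |Real.sin (θ/2)| := by
  have hz : (1 - Complex.exp (((-θ:ℝ):ℂ) * Complex.I)) =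
      Complex.ofReal (1 - Real.cos θ) + Complex.ofReal (Real.sin θ) * Complex.I := by
    rw [Complex.exp_mul_I, ← Complex.ofReal_cos, ← Complex.ofReal_sin, Real.cos_neg, Real.sin_neg]
    push_cast
    ring
  have h2 : (‖1 - Complex.exp (((-θ:ℝ):ℂ) * Complex.I)‖)^2
      = (1 - Real.cos θ)^2 + (Real.sin θ)^2 := by
    rw [Complex.sq_norm, hz, Complex.normSq_add_mul_I]
  have hc : Real.cos θ = 1 - 2 * Real.sin (θ/2)^2 := by
    have h1 : Real.cos (2*(θ/2)) = 2 * Real.cos (θ/2)^2 - 1 := Real.cos_two_mul _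
    rw [show 2*(θ/2) = θ by ring] at h1
    have h3 := Real.sin_sq_add_cos_sq (θ/2)
    linarith
  have h4 : (2 * |Real.sin (θ/2)|)^2 = (1 - Real.cos θ)^2 + (Real.sin θ)^2 := by
    have hs := Real.sin_sq_add_cos_sq θ
    rw [mul_pow, sq_abs]
    linear_combination 2*hc - hs
  have hnn : 0 ≤ ‖1 - Complex.exp (((-θ:ℝ):ℂ) * Complex.I)‖ :=
    norm_nonneg _
  calc ‖1 - Complex.exp (((-θ:ℝ):ℂ) * Complex.I)‖
      = Real.sqrt ((‖1 - Complex.exp (((-θ:ℝ):ℂ) * Complex.I)‖)^2) :=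
        (Real.sqrt_sq hnn).symm
    _ = Real.sqrt ((2 * |Real.sin (θ/2)|)^2) := by rw [h2, h4]
    _ = 2 * |Real.sin (θ/2)| := Real.sqrt_sq (by positivity)

/-- λ ↦ |ln(|1 - e^{-iλμ}|^{2n} / λ^{2n})| is integrable on [-π, π]. -/
theorem log_ratio_integrable (n μ : ℕ) (hn : 1 ≤ n) (hμ : 1 ≤ μ) :
    MeasureTheory.IntegrableOn
      (fun l : ℝ =>
        |Real.log (‖1 - Complex.exp (-(l * (μ : ℝ)) * Complex.I)‖ ^ (2 * n) / l ^ (2 * n))|)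
      (Set.Icc (-Real.pi) Real.pi) := by
  have hc0 : ((μ:ℝ)/2) ≠ 0 := by positivity
  set G : ℝ → ℝ := fun l =>
    (2*n : ℝ) * (Real.log 2 + Real.log (Real.sin (l * ((μ:ℝ)/2)))) - (2*n:ℝ) * Real.log l
    with hGdef
  have h1 : IntervalIntegrable (fun l : ℝ => Real.log (Real.sin (l * ((μ:ℝ)/2))))
      MeasureTheory.volume (-π) π := by
    have := (logsin_II (-π * ((μ:ℝ)/2)) (π * ((μ:ℝ)/2))).comp_mul_right (c := (μ:ℝ)/2)
    rwa [mul_div_cancel_right₀ _ hc0, mul_div_cancel_right₀ _ hc0] at this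
  have hGII : IntervalIntegrable G MeasureTheory.volume (-π) π :=
    ((intervalIntegrable_const.add h1).const_mul (2*n : ℝ)).sub
      ((log_II (-π) π).const_mul (2*n : ℝ))
  have hGInt : IntegrableOn G (Set.Icc (-π) π) :=
    (integrableOn_Icc_iff_integrableOn_Ioc).2
      ((intervalIntegrable_iff_integrableOn_Ioc_of_le (by linarith [Real.pi_pos])).1 hGII)
  have habs : IntegrableOn (fun l => |G l|) (Set.Icc (-π) π) := hGInt.abs
  have hZ : ∀ᵐ l : ℝ, ¬(Real.sin (l * ((μ:ℝ)/2)) = 0 ∨ l = 0) := by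
    have hcount : {l : ℝ | Real.sin (l * ((μ:ℝ)/2)) = 0 ∨ l = 0}.Countable := by
      apply Set.Countable.mono _
        ((Set.countable_range (fun k : ℤ => ((k:ℝ)*π)/((μ:ℝ)/2))).union (Set.countable_singleton 0))
      intro l hl
      rcases hl with h | h
      · rcases Real.sin_eq_zero_iff.1 h with ⟨k, hk⟩
        exact Or.inl ⟨k, by
          show ((k:ℝ)*π)/((μ:ℝ)/2) = l
          rw [hk]; exact mul_div_cancel_right₀ l hc0⟩
      · exact Or.inr (by simpa using h)
    have hm0 := hcount.measure_zero MeasureTheory.volume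
    rw [← MeasureTheory.compl_mem_ae_iff] at hm0
    filter_upwards [hm0] with l hl
    exact hl
  refine habs.congr (MeasureTheory.ae_restrict_of_ae ?_)
  filter_upwards [hZ] with l hl
  push_neg at hl
  obtain ⟨hs, hl0⟩ := hl
  have hA : ‖1 - Complex.exp (-((l:ℂ) * ((μ:ℝ):ℂ)) * Complex.I)‖
      = 2 * |Real.sin (l * ((μ:ℝ)/2))| := by
    have h := abs_one_sub_exp (l * (μ:ℝ))
    have harg : ((-(l * (μ:ℝ)) : ℝ) : ℂ) * Complex.I = -((l:ℂ) * ((μ:ℝ):ℂ)) * Complex.I := by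
      push_cast; ring
    rw [harg] at h
    rw [h, show l * (μ:ℝ)/2 = l * ((μ:ℝ)/2) by ring]
  have h2s : (2 * |Real.sin (l * ((μ:ℝ)/2))| : ℝ) ≠ 0 :=
    mul_ne_zero two_ne_zero (abs_ne_zero.2 hs)
  have hlog : Real.log (‖1 - Complex.exp (-((l:ℂ) * ((μ:ℝ):ℂ)) * Complex.I)‖ ^ (2*n)
      / l ^ (2*n)) = G l := by
    rw [hA, Real.log_div (pow_ne_zero _ h2s) (pow_ne_zero _ hl0), Real.log_pow, Real.log_pow,
      Real.log_mul two_ne_zero (abs_ne_zero.2 hs), Real.log_abs, hGdef]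
    push_cast
    ring
  rw [hlog]
end

section
/- Let x, y ∈ ℝ with x·y ≠ 0 and P₀ > 0. The maximum of F(u,v) = (xu + yv)² + y²u² over the disk u² + v² ≤ P₀ equals P₀·(x² + 2y² + √(x²(x² + 4y²)))/2, and is attained at (u,v) with u² = P₀(x² + 4y² + √(x²(x²+4y²)))/(2(x²+4y²)) and v² = P₀(x² + 4y² − √(x²(x²+4y²)))/(2(x²+4y²)), with sign(uv) = sign(xy). -/
/-- the maximum of (xu+yv)² + y²u² over the disk u²+v² ≤ P₀ and the
point where it is attained. -/
theorem quadratic_max_on_disk (x y P₀ : ℝ) (hxy : x * y ≠ 0) (hP : 0 < P₀) :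
    IsGreatest {z : ℝ | ∃ u v : ℝ, u ^ 2 + v ^ 2 ≤ P₀ ∧ z = (x * u + y * v) ^ 2 + y ^ 2 * u ^ 2}
      (P₀ * (x ^ 2 + 2 * y ^ 2 + Real.sqrt (x ^ 2 * (x ^ 2 + 4 * y ^ 2))) / 2) ∧
    ∃ u v : ℝ,
      u ^ 2 = P₀ * (x ^ 2 + 4 * y ^ 2 + Real.sqrt (x ^ 2 * (x ^ 2 + 4 * y ^ 2))) /
        (2 * (x ^ 2 + 4 * y ^ 2)) ∧
      v ^ 2 = P₀ * (x ^ 2 + 4 * y ^ 2 - Real.sqrt (x ^ 2 * (x ^ 2 + 4 * y ^ 2))) /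
        (2 * (x ^ 2 + 4 * y ^ 2)) ∧
      Real.sign (u * v) = Real.sign (x * y) ∧
      (x * u + y * v) ^ 2 + y ^ 2 * u ^ 2 =
        P₀ * (x ^ 2 + 2 * y ^ 2 + Real.sqrt (x ^ 2 * (x ^ 2 + 4 * y ^ 2))) / 2 := by
  obtain ⟨hx, hy⟩ := mul_ne_zero_iff.mp hxy
  have hx2 : 0 < x ^ 2 := by positivity
  have hy2 : 0 < y ^ 2 := by positivity
  set s := Real.sqrt (x ^ 2 * (x ^ 2 + 4 * y ^ 2)) with hs_def
  have hs2 : s ^ 2 = x ^ 2 * (x ^ 2 + 4 * y ^ 2) := Real.sq_sqrt (by positivity)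
  have hs0 : 0 < s := Real.sqrt_pos.mpr (by positivity)
  have hsx : x ^ 2 < s := by nlinarith [hs2, hs0, hx2, hy2]
  have hsA : s < x ^ 2 + 4 * y ^ 2 := by nlinarith [hs2, hs0, hx2, hy2]
  have hsx2 : 0 < s + x ^ 2 := by linarith
  set u := Real.sqrt (P₀ * (x ^ 2 + 4 * y ^ 2 + s) / (2 * (x ^ 2 + 4 * y ^ 2))) with hu_def
  have hu2 : u ^ 2 = P₀ * (x ^ 2 + 4 * y ^ 2 + s) / (2 * (x ^ 2 + 4 * y ^ 2)) :=
    Real.sq_sqrt (by positivity)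
  have hu0 : 0 < u := Real.sqrt_pos.mpr (by positivity)
  set v := (s - x ^ 2) / (2 * x * y) * u with hv_def
  have hvu : (s + x ^ 2) * v = 2 * x * y * u := by
    rw [hv_def]
    field_simp
    linear_combination hs2
  have hv2 : v ^ 2 = P₀ * (x ^ 2 + 4 * y ^ 2 - s) / (2 * (x ^ 2 + 4 * y ^ 2)) := by
    have h : (s + x ^ 2) ^ 2 * v ^ 2 = 4 * x ^ 2 * y ^ 2 * u ^ 2 := by
      have := congrArg (· ^ 2) hvu
      simp only [mul_pow] at this
      linarith [this]
    have hu2' : u ^ 2 * (2 * (x ^ 2 + 4 * y ^ 2)) = P₀ * (x ^ 2 + 4 * y ^ 2 + s) := by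
      rw [hu2]; field_simp
    have key2 : (s + x ^ 2) ^ 2 * (v ^ 2 * (2 * (x ^ 2 + 4 * y ^ 2))) =
        (s + x ^ 2) ^ 2 * (P₀ * (x ^ 2 + 4 * y ^ 2 - s)) := by
      linear_combination 2 * (x ^ 2 + 4 * y ^ 2) * h + 4 * x ^ 2 * y ^ 2 * hu2' +
        P₀ * (s + 2 * x ^ 2 - (x ^ 2 + 4 * y ^ 2)) * hs2
    have h3 := mul_left_cancel₀ (by positivity : ((s + x ^ 2) ^ 2 : ℝ) ≠ 0) key2
    rw [eq_div_iff (by positivity : (2 * (x ^ 2 + 4 * y ^ 2) : ℝ) ≠ 0)]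
    linarith [h3]
  have hsum : u ^ 2 + v ^ 2 = P₀ := by
    rw [hu2, hv2]
    field_simp
    ring
  have hzero : 2 * x * y * u - (s + x ^ 2) * v = 0 := by linarith
  have hval : (x * u + y * v) ^ 2 + y ^ 2 * u ^ 2 =
      P₀ * (x ^ 2 + 2 * y ^ 2 + s) / 2 := by
    have key : 2 * (s + x ^ 2) * ((x * u + y * v) ^ 2 + y ^ 2 * u ^ 2) =
        2 * (s + x ^ 2) * ((x ^ 2 + 2 * y ^ 2 + s) / 2 * (u ^ 2 + v ^ 2)) := by
      linear_combination (-(2 * x * y * u - (s + x ^ 2) * v)) * hzero - u ^ 2 * hs2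
    have := mul_left_cancel₀ (by positivity : (2 * (s + x ^ 2)) ≠ 0) key
    rw [this, hsum]; ring
  refine ⟨⟨⟨u, v, le_of_eq hsum, hval.symm⟩, ?_⟩, u, v, hu2, hv2, ?_, hval⟩
  · rintro z ⟨a, b, h1, rfl⟩
    have h2 : (x ^ 2 + 2 * y ^ 2 + s) * (a ^ 2 + b ^ 2) ≤ (x ^ 2 + 2 * y ^ 2 + s) * P₀ :=
      mul_le_mul_of_nonneg_left h1 (by positivity)
    nlinarith [sq_nonneg (2 * x * y * a - (s + x ^ 2) * b), hs2, hsx2, h2,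
      sq_nonneg a, sq_nonneg b]
  · -- sign
    have huv : u * v = (s - x ^ 2) / (2 * x * y) * u ^ 2 := by rw [hv_def]; ring
    rcases lt_or_gt_of_ne hxy with hneg | hpos
    · have : u * v < 0 := by
        rw [huv]
        apply mul_neg_of_neg_of_pos _ (by positivity)
        apply div_neg_of_pos_of_neg (by linarith)
        linarith
      rw [Real.sign_of_neg this, Real.sign_of_neg hneg]
    · have : 0 < u * v := by
        rw [huv]
        apply mul_pos _ (by positivity)
        apply div_pos (by linarith)
        linarith
      rw [Real.sign_of_pos this, Real.sign_of_pos hpos]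
end

section
/- Let (ε_m)_{m∈ℤ} be orthonormal in a Hilbert space H, φ ∈ ℓ²(ℕ), and b : ℕ → ℝ satisfy ∑_{k}(k+1)|b(k)|² < ∞ and ∑_k |b(k)| < ∞. Define ζ(m) = ∑_{k≥0} φ(k)ε_{m-k} and Bζ = ∑_{m≥0} b(m) ζ(m). Then the squared distance from Bζ to the closed span of {ε_j : j ≤ -1} equals ∑_{j≥0} | ∑_{m≥0} b(m+j) φ(m) |², i.e. ‖Bζ − proj(Bζ)‖² = ‖B φ‖² where B is the Hankel operator (Bφ)_j = ∑_{m≥0} b(m+j)φ(m). -/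
open scoped RealInnerProductSpace

section Helpers

variable {H : Type*} [NormedAddCommGroup H] [InnerProductSpace ℝ H] [CompleteSpace H]

lemma fpe_summable {ι : Type*} {e : ι → H} (he : Orthonormal ℝ e) {c : ι → ℝ}
    (hc : Summable fun i => c i ^ 2) : Summable fun i => c i • e i := by
  have h := (he.orthogonalFamily.summable_iff_norm_sq_summable c).2
    (by simpa [Real.norm_eq_abs, sq_abs] using hc)
  simpa [LinearIsometry.toSpanSingleton_apply] using h

lemma fpe_inner {ι : Type*} {e : ι → H} (he : Orthonormal ℝ e) {c : ι → ℝ}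
    (hc : Summable fun i => c i ^ 2) (j : ι) :
    ⟪e j, (∑' i, c i • e i)⟫ = c j := by
  classical
  have hw := (fpe_summable he hc).hasSum
  have h2 := hw.mapL (innerSL ℝ (e j))
  have h3 : ∀ i, ⟪e j, c i • e i⟫ = if i = j then c j else 0 := by
    intro i
    rw [real_inner_smul_right, orthonormal_iff_ite.mp he j i]
    by_cases h : i = j
    · subst h; simp
    · simp [h, Ne.symm h]
  have h2' : HasSum (fun i => if i = j then c j else 0) ⟪e j, (∑' i, c i • e i)⟫ := by
    simpa only [innerSL_apply_apply, h3] using h2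
  exact h2'.unique (hasSum_ite_eq j (c j))

lemma fpe_norm_sq {ι : Type*} {e : ι → H} (he : Orthonormal ℝ e) {c : ι → ℝ}
    (hc : Summable fun i => c i ^ 2) :
    ‖∑' i, c i • e i‖ ^ 2 = ∑' i, c i ^ 2 := by
  have hw := (fpe_summable he hc).hasSum
  have h2 := hw.mapL (innerSL ℝ (∑' i, c i • e i))
  have h3 : ∀ i, ⟪(∑' i', c i' • e i'), c i • e i⟫ = c i ^ 2 := by
    intro i
    rw [real_inner_smul_right, real_inner_comm, fpe_inner he hc i, sq]
  have h2' : HasSum (fun i => c i ^ 2)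
      ⟪(∑' i, c i • e i), (∑' i, c i • e i)⟫ := by
    simpa only [innerSL_apply_apply, h3] using h2
  rw [← real_inner_self_eq_norm_sq]
  exact h2'.tsum_eq.symm

lemma fpe_tsum_mem {ι : Type*} {f : ι → H} {S : Submodule ℝ H} (hSc : IsClosed (S : Set H))
    (h : ∀ i, f i ∈ S) : (∑' i, f i) ∈ S := by
  by_cases hf : Summable f
  · exact hSc.mem_of_tendsto hf.hasSum
      (Filter.Eventually.of_forall fun s => S.sum_mem fun i _ => h i)
  · rw [tsum_eq_zero_of_not_summable hf]; exact S.zero_mem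

lemma fpe_closure_orth (K : Submodule ℝ H) : (K.topologicalClosure)ᗮ = Kᗮ := by
  rw [← Submodule.orthogonal_orthogonal_eq_closure, Submodule.triorthogonal_eq_orthogonal]

lemma fpe_mem_span_orth {s : Set H} {x : H} (h : ∀ y ∈ s, ⟪y, x⟫ = 0) :
    x ∈ (Submodule.span ℝ s)ᗮ := by
  rw [Submodule.mem_orthogonal]
  intro y hy
  induction hy using Submodule.span_induction with
  | mem y hy => exact h y hy
  | zero => simp
  | add y z _ _ hy hz => rw [inner_add_left, hy, hz, add_zero]
  | smul a y _ hy => rw [real_inner_smul_left, hy, mul_zero]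

end Helpers

/-- the squared distance of Bζ = ∑_{m≥0} b(m) ζ(m) from the closed span of
{ε_j : j ≤ -1} equals ‖Bφ‖² = ∑_j |∑_m b(m+j) φ(m)|², where B is the Hankel operator. -/
theorem functional_prediction_error {H : Type*} [NormedAddCommGroup H]
    [InnerProductSpace ℝ H] [CompleteSpace H]
    (ε : ℤ → H) (hε : Orthonormal ℝ ε) (φ : ℕ → ℝ) (hφ : Summable fun k => (φ k) ^ 2)
    (b : ℕ → ℝ) (hb1 : Summable fun k => |b k|)
    (hb2 : Summable fun k => (((k : ℕ) + 1 : ℕ) : ℝ) * (b k) ^ 2)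
    (S : Submodule ℝ H)
    (hS : S = (Submodule.span ℝ (ε '' {j : ℤ | j ≤ -1})).topologicalClosure)
    [S.HasOrthogonalProjection] :
    ‖(∑' m : ℕ, b m • ∑' k : ℕ, φ k • ε ((m : ℤ) - (k : ℤ))) -
        (S.orthogonalProjectionOnto
          (∑' m : ℕ, b m • ∑' k : ℕ, φ k • ε ((m : ℤ) - (k : ℤ))) : H)‖ ^ 2 =
      ∑' j : ℕ, (∑' m : ℕ, b (m + j) * φ m) ^ 2 := by
  classical
  set ζ : ℕ → H := fun m => ∑' k : ℕ, φ k • ε ((m : ℤ) - (k : ℤ)) with hζdef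
  have hem : ∀ m : ℕ, Orthonormal ℝ (fun k : ℕ => ε ((m : ℤ) - (k : ℤ))) := by
    intro m
    refine hε.comp (fun k : ℕ => (m : ℤ) - (k : ℤ)) ?_
    intro a b hab
    have h := sub_right_injective hab
    exact_mod_cast h
  have hζsum : ∀ m : ℕ, Summable fun k : ℕ => φ k • ε ((m : ℤ) - (k : ℤ)) :=
    fun m => fpe_summable (hem m) hφ
  have hζnormsq : ∀ m : ℕ, ‖ζ m‖ ^ 2 = ∑' k, φ k ^ 2 := by
    intro m
    rw [hζdef]
    exact fpe_norm_sq (hem m) hφ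
  set C : ℝ := Real.sqrt (∑' k, φ k ^ 2) with hC
  have hζnorm : ∀ m, ‖ζ m‖ = C := fun m => by
    rw [hC, ← hζnormsq m, Real.sqrt_sq (norm_nonneg _)]
  set P : ℕ → H := fun m => ∑ k ∈ Finset.range (m + 1), φ k • ε ((m : ℤ) - (k : ℤ)) with hPdef
  set Q : ℕ → H :=
    fun m => ∑' k : ℕ, φ (k + (m + 1)) • ε ((m : ℤ) - ((k + (m + 1) : ℕ) : ℤ)) with hQdef
  have hPQ : ∀ m, P m + Q m = ζ m := by
    intro m
    rw [hPdef, hQdef, hζdef]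
    exact Summable.sum_add_tsum_nat_add (m + 1) (hζsum m)
  have hPnorm : ∀ m, ‖P m‖ ≤ C := by
    intro m
    have h1 : ‖P m‖ ^ 2 = ∑ k ∈ Finset.range (m + 1), φ k ^ 2 := by
      have h := (hem m).orthogonalFamily.norm_sum (fun k => φ k) (Finset.range (m + 1))
      rw [hPdef]
      simpa [Real.norm_eq_abs, sq_abs] using h
    have h2 : ‖P m‖ ^ 2 ≤ ∑' k, φ k ^ 2 := by
      rw [h1]; exact Summable.sum_le_tsum _ (fun i _ => sq_nonneg _) hφ
    have := Real.sqrt_le_sqrt h2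
    rwa [Real.sqrt_sq (norm_nonneg _)] at this
  have hCnn : 0 ≤ C := Real.sqrt_nonneg _
  have hQnorm : ∀ m, ‖Q m‖ ≤ 2 * C := by
    intro m
    have hQeq : Q m = ζ m - P m := eq_sub_of_add_eq' (hPQ m)
    rw [hQeq]
    calc ‖ζ m - P m‖ ≤ ‖ζ m‖ + ‖P m‖ := norm_sub_le _ _
      _ ≤ C + C := add_le_add (le_of_eq (hζnorm m)) (hPnorm m)
      _ = 2 * C := by ring
  have hbP : Summable fun m => b m • P m := by
    refine Summable.of_norm (Summable.of_nonneg_of_le (fun m => norm_nonneg _)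
      (fun m => ?_) (hb1.mul_right C))
    rw [norm_smul, Real.norm_eq_abs]
    exact mul_le_mul_of_nonneg_left (hPnorm m) (abs_nonneg _)
  have hbQ : Summable fun m => b m • Q m := by
    refine Summable.of_norm (Summable.of_nonneg_of_le (fun m => norm_nonneg _)
      (fun m => ?_) (hb1.mul_right (2 * C)))
    rw [norm_smul, Real.norm_eq_abs]
    exact mul_le_mul_of_nonneg_left (hQnorm m) (abs_nonneg _)
  set u : H := ∑' m, b m • P m with hudef
  set v : H := ∑' m, b m • Q m with hvdef
  have hxuv : HasSum (fun m => b m • ζ m) (u + v) := by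
    have h := hbP.hasSum.add hbQ.hasSum
    rw [← hudef, ← hvdef] at h
    refine HasSum.congr_fun h ?_
    intro m
    rw [← smul_add, hPQ m]
  have hSclosed : IsClosed (S : Set H) := by
    rw [hS]; exact Submodule.isClosed_topologicalClosure _
  have hQmem : ∀ m, Q m ∈ S := by
    intro m
    rw [hQdef]
    refine fpe_tsum_mem hSclosed fun k => ?_
    refine Submodule.smul_mem _ _ ?_
    rw [hS]
    refine Submodule.le_topologicalClosure _ (Submodule.subset_span ?_)
    exact ⟨(m : ℤ) - ((k + (m + 1) : ℕ) : ℤ), by simp only [Set.mem_setOf_eq]; omega, rfl⟩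
  have hvmem : v ∈ S := by
    rw [hvdef]
    exact fpe_tsum_mem hSclosed fun m => Submodule.smul_mem _ _ (hQmem m)
  have hSorth : Sᗮ = (Submodule.span ℝ (ε '' {j : ℤ | j ≤ -1}))ᗮ := by
    rw [hS, fpe_closure_orth]
  have hεorth : ∀ j : ℤ, 0 ≤ j → ε j ∈ Sᗮ := by
    intro j hj
    rw [hSorth]
    refine fpe_mem_span_orth fun y hy => ?_
    obtain ⟨i, hi, rfl⟩ := hy
    simp only [Set.mem_setOf_eq] at hi
    rw [orthonormal_iff_ite.mp hε i j, if_neg (by omega)]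
  have hPmem : ∀ m, b m • P m ∈ Sᗮ := by
    intro m
    rw [hPdef]
    refine Submodule.smul_mem _ _ (Submodule.sum_mem _ fun k hk => Submodule.smul_mem _ _ ?_)
    have hk' := Finset.mem_range.mp hk
    exact hεorth _ (by omega)
  have humem : u ∈ Sᗮ := by
    rw [hudef]
    exact fpe_tsum_mem (Submodule.isClosed_orthogonal S) hPmem
  -- the goal vector equals u + v
  have hxg : (∑' m : ℕ, b m • ∑' k : ℕ, φ k • ε ((m : ℤ) - (k : ℤ))) = u + v := hxuv.tsum_eq
  have hproj : (S.orthogonalProjectionOnto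
      (∑' m : ℕ, b m • ∑' k : ℕ, φ k • ε ((m : ℤ) - (k : ℤ))) : H) = v := by
    rw [← Submodule.starProjection_apply]
    refine Submodule.eq_starProjection_of_mem_orthogonal (K := S) hvmem ?_
    rw [hxg, add_sub_cancel_right]
    exact humem
  rw [hproj, hxg, add_sub_cancel_right]
  -- now compute ‖u‖²
  set c : ℕ → ℝ := fun j => ∑' m : ℕ, b (m + j) * φ m with hcdef
  set e : ℕ → H := fun j => ε (j : ℤ) with hedef
  have he : Orthonormal ℝ e := by
    rw [hedef]
    exact hε.comp (fun j : ℕ => (j : ℤ)) Nat.cast_injective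
  have hu : HasSum (fun m => b m • P m) u := by rw [hudef]; exact hbP.hasSum
  have hcu : ∀ j : ℕ, ⟪e j, u⟫ = c j := by
    intro j
    have h2 := hu.mapL (innerSL ℝ (e j))
    have hip : ∀ m : ℕ, ⟪e j, b m • P m⟫ = b m * (if j ≤ m then φ (m - j) else 0) := by
      intro m
      rw [real_inner_smul_right]
      congr 1
      rw [hPdef, hedef]
      simp only [inner_sum, real_inner_smul_right, orthonormal_iff_ite.mp hε]
      by_cases hjm : j ≤ m
      · rw [if_pos hjm]
        rw [Finset.sum_eq_single_of_mem (m - j) (Finset.mem_range.mpr (by omega))]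
        · rw [if_pos (by omega), mul_one]
        · intro k hk hkne
          have hk' := Finset.mem_range.mp hk
          have : ¬ ((j : ℤ) = (m : ℤ) - (k : ℤ)) := by omega
          rw [if_neg this, mul_zero]
      · rw [if_neg hjm]
        refine Finset.sum_eq_zero fun k hk => ?_
        have hk' := Finset.mem_range.mp hk
        have : ¬ ((j : ℤ) = (m : ℤ) - (k : ℤ)) := by omega
        rw [if_neg this, mul_zero]
    have h2' : HasSum (fun m => b m * (if j ≤ m then φ (m - j) else 0)) ⟪e j, u⟫ := by
      simpa only [innerSL_apply_apply, hip] using h2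
    have key := Summable.sum_add_tsum_nat_add
      (f := fun m => b m * (if j ≤ m then φ (m - j) else 0)) j h2'.summable
    have hz : (∑ m ∈ Finset.range j, (b m * if j ≤ m then φ (m - j) else 0)) = 0 := by
      refine Finset.sum_eq_zero fun m hm => ?_
      have := Finset.mem_range.mp hm
      rw [if_neg (by omega), mul_zero]
    rw [hz, zero_add, h2'.tsum_eq] at key
    rw [hcdef, ← key]
    refine tsum_congr fun m => ?_
    simp [Nat.le_add_left]
  have hcsq : Summable fun j => c j ^ 2 := by
    have h := he.inner_products_summable (x := u)
    refine h.congr fun j => ?_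
    rw [hcu j, Real.norm_eq_abs, sq_abs]
  set w : H := ∑' j, c j • e j with hwdef
  have hwinner : ∀ j, ⟪e j, w⟫ = c j := fun j => by
    rw [hwdef]; exact fpe_inner he hcsq j
  have hwnorm : ‖w‖ ^ 2 = ∑' j, c j ^ 2 := by
    rw [hwdef]; exact fpe_norm_sq he hcsq
  set T := (Submodule.span ℝ (Set.range e)).topologicalClosure with hTdef
  have hTclosed : IsClosed (T : Set H) := Submodule.isClosed_topologicalClosure _
  have heT : ∀ j : ℕ, e j ∈ T :=
    fun j => Submodule.le_topologicalClosure _ (Submodule.subset_span (Set.mem_range_self j))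
  have huT : u ∈ T := by
    rw [hudef]
    refine fpe_tsum_mem hTclosed fun m => ?_
    rw [hPdef]
    refine Submodule.smul_mem _ _ (Submodule.sum_mem _ fun k hk => Submodule.smul_mem _ _ ?_)
    have hk' := Finset.mem_range.mp hk
    have hε' : ε ((m : ℤ) - (k : ℤ)) = e (m - k) := by
      rw [hedef]; congr 1; omega
    rw [hε']
    exact heT _
  have hwT : w ∈ T := by
    rw [hwdef]
    exact fpe_tsum_mem hTclosed fun j => Submodule.smul_mem _ _ (heT j)
  have hduw : u - w = 0 := by
    have hdT : u - w ∈ T := Submodule.sub_mem _ huT hwT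
    have hdO : u - w ∈ Tᗮ := by
      rw [hTdef, fpe_closure_orth]
      refine fpe_mem_span_orth fun y hy => ?_
      obtain ⟨j, rfl⟩ := hy
      rw [inner_sub_right, hcu j, hwinner j, sub_self]
    have hmem : u - w ∈ T ⊓ Tᗮ := ⟨hdT, hdO⟩
    rwa [Submodule.inf_orthogonal_eq_bot, Submodule.mem_bot] at hmem
  have huw : u = w := sub_eq_zero.mp hduw
  rw [huw, hwnorm]
end
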